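/- Let D be a finite set with n = |D| ≥ 1 and let D_i ⊆ D. For every function v : 2^D → ℝ, the sum of the Shapley values of the elements of D_i equals Σ_{x ∈ D_i} φ^SV_x(D, v) = Σ_{S : ∅ ≠ S ⊊ D} (|D_i ∩ S|·n − |D_i|·|S|)·((|S|−1)!·(n−|S|−1)!/n!)·v(S) + (|D_i|/n)·v(D) − (|D_i|/n)·v(∅). -/

import Mathlib

open Finset

/-- Shapley weight `w_n(k) = k! (n-k-1)! / n!`. -/
noncomputable def w (m k : ℕ) : ℝ :=
  (Nat.factorial k : ℝ) * (Nat.factorial (m - k - 1) : ℝ) / (Nat.factorial m : ℝ)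

/-- Coefficient representation of the client-level Shapley value: the sum of
the Shapley values of the blocks in `Di ⊆ D` as a weighted sum of utilities. -/
theorem shapley_client_level_coefficients {α : Type*} [DecidableEq α]
    (D Di : Finset α) (hDi : Di ⊆ D) (hn : 1 ≤ D.card) (v : Finset α → ℝ) :
    ∑ x ∈ Di, ∑ S ∈ (D.erase x).powerset,
        w D.card S.card * (v (insert x S) - v S)
      = (∑ S ∈ D.powerset.filter (fun S => S ≠ ∅ ∧ S ≠ D),
          (((Di ∩ S).card * D.card : ℝ) - ((Di.card : ℝ) * (S.card : ℝ)))
            * ((Nat.factorial (S.card - 1) : ℝ) * (Nat.factorial (D.card - S.card - 1) : ℝ)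
                / (Nat.factorial D.card : ℝ)) * v S)
        + (Di.card : ℝ) / (D.card : ℝ) * v D
        - (Di.card : ℝ) / (D.card : ℝ) * v ∅ := by
  classical
  set n := D.card with hndef
  -- Step 1: rewrite each inner sum as a sum over all subsets of D.
  have key : ∀ x ∈ Di,
      (∑ S ∈ (D.erase x).powerset, w n S.card * (v (insert x S) - v S))
      = ∑ T ∈ D.powerset,
          ((if x ∈ T then w n (T.card - 1) * v T else 0)
            - (if x ∉ T then w n T.card * v T else 0)) := by
    intro x hx
    have hxD : x ∈ D := hDi hx
    have hpow : (D.erase x).powerset = D.powerset.filter (fun S => x ∉ S) := by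
      ext S; simp [Finset.subset_erase, and_comm]
    have himg : ((D.erase x).powerset).image (insert x)
        = D.powerset.filter (fun S => x ∈ S) := by
      ext T
      simp only [mem_image, mem_filter, mem_powerset]
      constructor
      · rintro ⟨S, hS, rfl⟩
        rw [Finset.subset_erase] at hS
        exact ⟨insert_subset hxD hS.1, mem_insert_self _ _⟩
      · rintro ⟨hT, hxT⟩
        exact ⟨T.erase x, by simp [mem_powerset, Finset.erase_subset_erase _ hT],
          Finset.insert_erase hxT⟩
    have hinj : Set.InjOn (insert x) ((D.erase x).powerset : Set (Finset α)) := by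
      intro S₁ h₁ S₂ h₂ h
      simp only [coe_powerset, Set.mem_preimage, Set.mem_powerset_iff, coe_erase] at h₁ h₂
      have hx₁ : x ∉ S₁ := fun hc => ((h₁ hc).2 rfl)
      have hx₂ : x ∉ S₂ := fun hc => ((h₂ hc).2 rfl)
      have := congrArg (fun (s : Finset α) => s.erase x) h
      simpa [Finset.erase_insert hx₁, Finset.erase_insert hx₂] using this
    have hA : (∑ S ∈ (D.erase x).powerset, w n S.card * v (insert x S))
        = ∑ T ∈ D.powerset, (if x ∈ T then w n (T.card - 1) * v T else 0) := by
      rw [← Finset.sum_filter, ← himg, Finset.sum_image (fun a ha b hb h => hinj ha hb h)]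
      refine Finset.sum_congr rfl ?_
      intro S hS
      rw [mem_powerset, Finset.subset_erase] at hS
      rw [Finset.card_insert_of_notMem hS.2]
      simp
    have hB : (∑ S ∈ (D.erase x).powerset, w n S.card * v S)
        = ∑ T ∈ D.powerset, (if x ∉ T then w n T.card * v T else 0) := by
      rw [← Finset.sum_filter, ← hpow]
    simp only [mul_sub, Finset.sum_sub_distrib]
    rw [hA, hB]
  rw [Finset.sum_congr rfl key, Finset.sum_comm]
  -- Step 2: compute the coefficient of each v T.
  have coeff : ∀ T ∈ D.powerset,
      (∑ x ∈ Di, ((if x ∈ T then w n (T.card - 1) * v T else 0)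
            - (if x ∉ T then w n T.card * v T else 0)))
      = (((Di ∩ T).card : ℝ) * w n (T.card - 1)
          - ((Di \ T).card : ℝ) * w n T.card) * v T := by
    intro T hT
    rw [Finset.sum_sub_distrib]
    have h1 : (∑ x ∈ Di, (if x ∈ T then w n (T.card - 1) * v T else 0))
        = ((Di ∩ T).card : ℝ) * (w n (T.card - 1) * v T) := by
      rw [Finset.sum_ite_mem, Finset.sum_const, nsmul_eq_mul]
    have h2 : (∑ x ∈ Di, (if x ∉ T then w n T.card * v T else 0))
        = ((Di \ T).card : ℝ) * (w n T.card * v T) := by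
      rw [← Finset.sum_filter, ← Finset.sdiff_eq_filter, Finset.sum_const, nsmul_eq_mul]
    rw [h1, h2]; ring
  rw [Finset.sum_congr rfl coeff]
  -- Step 3: split off ∅ and D.
  have hsplit := Finset.sum_filter_add_sum_filter_not D.powerset
      (fun T => T ≠ ∅ ∧ T ≠ D)
      (fun T => (((Di ∩ T).card : ℝ) * w n (T.card - 1)
          - ((Di \ T).card : ℝ) * w n T.card) * v T)
  have hne : (∅ : Finset α) ≠ D := by
    intro h
    have := hn
    rw [hndef, ← h, Finset.card_empty] at this
    omega
  have hfilt : D.powerset.filter (fun T => ¬(T ≠ ∅ ∧ T ≠ D)) = {∅, D} := by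
    ext T
    simp only [mem_filter, mem_powerset, not_and_or, not_not, mem_insert, mem_singleton]
    constructor
    · rintro ⟨-, h | h⟩ <;> simp [h]
    · rintro (rfl | rfl) <;> simp
  have hnpos : 0 < n := hn
  have hfn : ((Nat.factorial n : ℕ) : ℝ) ≠ 0 := by
    exact_mod_cast (Nat.factorial_pos n).ne'
  have hfacn : (Nat.factorial n : ℝ) = (n : ℝ) * (Nat.factorial (n-1) : ℝ) := by
    obtain ⟨m, hm⟩ : ∃ m, n = m + 1 := ⟨n - 1, by omega⟩
    simp [hm, Nat.factorial_succ]
  rw [← hsplit, hfilt, Finset.sum_pair hne]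
  have hE : ((((Di ∩ (∅:Finset α)).card : ℝ) * w n ((∅:Finset α).card - 1)
        - ((Di \ (∅:Finset α)).card : ℝ) * w n (∅:Finset α).card) * v ∅)
      = -((Di.card : ℝ) / (n : ℝ) * v ∅) := by
    have h0 : n - 0 - 1 = n - 1 := by omega
    simp only [Finset.inter_empty, Finset.sdiff_empty, Finset.card_empty, Nat.cast_zero,
      zero_mul, zero_sub, w, h0, Nat.factorial_zero, Nat.cast_one, one_mul]
    rw [hfacn]
    have : (n:ℝ) ≠ 0 := by exact_mod_cast hnpos.ne'
    have h1 : ((Nat.factorial (n-1) : ℕ) : ℝ) ≠ 0 := by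
      exact_mod_cast (Nat.factorial_pos (n-1)).ne'
    field_simp
  have hD : ((((Di ∩ D).card : ℝ) * w n (D.card - 1)
        - ((Di \ D).card : ℝ) * w n D.card) * v D)
      = (Di.card : ℝ) / (n : ℝ) * v D := by
    have h0 : n - (n-1) - 1 = 0 := by omega
    have h2 : n - n - 1 = 0 := by omega
    rw [Finset.inter_eq_left.mpr hDi, Finset.sdiff_eq_empty_iff_subset.mpr hDi]
    simp only [Finset.card_empty, Nat.cast_zero, zero_mul, sub_zero, w, ← hndef, h0,
      Nat.factorial_zero, Nat.cast_one, mul_one]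
    rw [hfacn]
    have : (n:ℝ) ≠ 0 := by exact_mod_cast hnpos.ne'
    have h1 : ((Nat.factorial (n-1) : ℕ) : ℝ) ≠ 0 := by
      exact_mod_cast (Nat.factorial_pos (n-1)).ne'
    field_simp
  rw [hE, hD]
  have hmain : ∀ T ∈ D.powerset.filter (fun T => T ≠ ∅ ∧ T ≠ D),
      ((((Di ∩ T).card : ℝ) * w n (T.card - 1) - ((Di \ T).card : ℝ) * w n T.card) * v T)
      = (((Di ∩ T).card * n : ℝ) - ((Di.card : ℝ) * (T.card : ℝ)))
          * ((Nat.factorial (T.card - 1) : ℝ) * (Nat.factorial (n - T.card - 1) : ℝ)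
              / (Nat.factorial n : ℝ)) * v T := by
    intro T hT
    simp only [mem_filter, mem_powerset] at hT
    obtain ⟨hTD, hTne, hTneD⟩ := hT
    have ht1 : 1 ≤ T.card := Finset.card_pos.mpr (Finset.nonempty_iff_ne_empty.mpr hTne)
    have htn : T.card < n :=
      Finset.card_lt_card (Finset.ssubset_iff_subset_ne.mpr ⟨hTD, hTneD⟩)
    have hcard : (Di \ T).card + (Di ∩ T).card = Di.card :=
      Finset.card_sdiff_add_card_inter Di T
    have hsub : n - (T.card - 1) - 1 = n - T.card := by omega
    have hft : (T.card).factorial = T.card * (T.card - 1).factorial := by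
      obtain ⟨t', ht'⟩ : ∃ t', T.card = t' + 1 := ⟨T.card - 1, by omega⟩
      simp [ht', Nat.factorial_succ]
    have hfnt : (n - T.card).factorial = (n - T.card) * (n - T.card - 1).factorial := by
      obtain ⟨u, hu⟩ : ∃ u, n - T.card = u + 1 := ⟨n - T.card - 1, by omega⟩
      simp [hu, Nat.factorial_succ]
    have hB : ((Di \ T).card : ℝ) = (Di.card : ℝ) - ((Di ∩ T).card : ℝ) := by
      rw [← hcard]; push_cast; ring
    rw [w, w, hsub, hft, hfnt, hB]
    have hnt : ((n - T.card : ℕ) : ℝ) = (n:ℝ) - (T.card:ℝ) := by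
      rw [Nat.cast_sub htn.le]
    push_cast [hnt]
    field_simp
    ring
  rw [Finset.sum_congr rfl hmain]
  ring
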